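/- Gát's formula for the Fejér kernel of the Walsh system at dyadic indices: let A > t be nonnegative integers and x ∈ I_t \ I_{t+1} (i.e. x_0 = ... = x_{t-1} = 0, x_t = 1). Then K_{2^A}(x) = 2^{t-1} if x ∈ I_A(e_t), K_{2^A}(x) = (2^A + 1)/2 if x ∈ I_A, and K_{2^A}(x) = 0 otherwise, where K_m = (1/m) Σ_{k=0}^{m-1} D_k. -/

import Mathlib

open Finset

/-- The dyadic group `G = (ℤ/2)^ℕ`. -/
abbrev G := ℕ → ZMod 2

/-- Walsh–Paley functions: `w n x = ∏ k, ((-1)^(x k))^(n_k)` for the binary expansion of `n`. -/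
noncomputable def walsh (n : ℕ) (x : G) : ℝ :=
  ∏ k ∈ Finset.range (n + 1), if n.testBit k then (-1 : ℝ) ^ (x k).val else 1

/-- Walsh–Dirichlet kernels `D m = ∑_{k<m} w k`. -/
noncomputable def dirichlet (m : ℕ) (x : G) : ℝ :=
  ∑ k ∈ Finset.range m, walsh k x

/-- Walsh–Fejér kernels `K n = (1/n) ∑_{k<n} D k`. -/
noncomputable def fejer (n : ℕ) (x : G) : ℝ :=
  (1 / (n : ℝ)) * ∑ k ∈ Finset.range n, dirichlet k x

/-- The cylinder set `I_N = {t : t_0 = ⋯ = t_{N-1} = 0}`. -/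
def IN (N : ℕ) : Set G := {t | ∀ j < N, t j = 0}

lemma walsh_eq_prod (x : G) (m N : ℕ) (h : m < N) :
    walsh m x = ∏ k ∈ Finset.range N, if m.testBit k then (-1:ℝ)^(x k).val else 1 := by
  unfold walsh
  refine Finset.prod_subset (Finset.range_subset_range.2 h) ?_
  intro k hk hk'
  simp only [Finset.mem_range, not_lt] at hk'
  have : m < 2 ^ k := lt_of_lt_of_le (Nat.lt_two_pow_self (n := m)) (Nat.pow_le_pow_right (by norm_num) (by omega))
  rw [Nat.testBit_eq_false_of_lt this]
  simp

lemma walsh_two_pow_add (x : G) (A m : ℕ) (hm : m < 2 ^ A) :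
    walsh (2 ^ A + m) x = (-1:ℝ) ^ (x A).val * walsh m x := by
  set N := 2 ^ A + m + 1 with hN
  rw [walsh_eq_prod x _ N (by omega), walsh_eq_prod x m N (by omega)]
  have hA : A ∈ Finset.range N := by
    have := Nat.lt_two_pow_self (n := A)
    simp only [Finset.mem_range]; omega
  rw [← Finset.prod_erase_mul _ _ hA, ← Finset.prod_erase_mul _ _ hA]
  have hmt : m.testBit A = false := Nat.testBit_eq_false_of_lt hm
  have ht : (2 ^ A + m).testBit A = true := by
    rw [Nat.testBit_two_pow_add_eq, hmt]; rfl
  rw [ht, hmt, if_pos rfl, if_neg Bool.false_ne_true, mul_one]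
  rw [mul_comm]
  congr 1
  apply Finset.prod_congr rfl
  intro k hk
  have hkA : k ≠ A := (Finset.mem_erase.1 hk).1
  rcases lt_or_gt_of_ne hkA with h | h
  · rw [Nat.testBit_two_pow_add_gt h]
  · have h1 : (2:ℕ) ^ A + m < 2 ^ k := by
      calc 2 ^ A + m < 2 ^ A + 2 ^ A := by omega
        _ = 2 ^ (A+1) := by ring
        _ ≤ 2 ^ k := Nat.pow_le_pow_right (by norm_num) h
    rw [Nat.testBit_eq_false_of_lt h1, Nat.testBit_eq_false_of_lt (by omega : m < 2 ^ k)]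

lemma sumP (x : G) (A : ℕ) :
    ∑ m ∈ Finset.range (2 ^ A), walsh m x
      = ∏ k ∈ Finset.range A, (1 + (-1:ℝ) ^ (x k).val) := by
  induction A with
  | zero => simp [walsh]
  | succ B ih =>
    rw [pow_succ, mul_two, Finset.sum_range_add]
    have h2 : ∑ m ∈ Finset.range (2 ^ B), walsh (2 ^ B + m) x
        = (-1:ℝ)^(x B).val * ∑ m ∈ Finset.range (2 ^ B), walsh m x := by
      rw [Finset.mul_sum]
      exact Finset.sum_congr rfl fun m hm => walsh_two_pow_add x B m (Finset.mem_range.1 hm)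
    rw [h2, ih, Finset.prod_range_succ]
    ring

lemma sumQ (x : G) (B : ℕ) :
    ∑ m ∈ Finset.range (2 ^ (B+1)), (m : ℝ) * walsh m x
      = (1 + (-1:ℝ) ^ (x B).val) * (∑ m ∈ Finset.range (2 ^ B), (m:ℝ) * walsh m x)
        + 2 ^ B * (-1:ℝ) ^ (x B).val * ∏ k ∈ Finset.range B, (1 + (-1:ℝ) ^ (x k).val) := by
  rw [pow_succ, mul_two, Finset.sum_range_add]
  have h2 : ∑ m ∈ Finset.range (2 ^ B), ((2^B + m : ℕ) : ℝ) * walsh (2^B + m) x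
      = (2^B:ℝ) * (-1:ℝ)^(x B).val * (∑ m ∈ Finset.range (2^B), walsh m x)
        + (-1:ℝ)^(x B).val * ∑ m ∈ Finset.range (2^B), (m:ℝ) * walsh m x := by
    rw [Finset.mul_sum, Finset.mul_sum, ← Finset.sum_add_distrib]
    apply Finset.sum_congr rfl
    intro m hm
    rw [walsh_two_pow_add x B m (Finset.mem_range.1 hm)]
    push_cast
    ring
  rw [h2, sumP]
  ring

lemma Pzero (x : G) (B u : ℕ) (hu : u < B) (hxu : x u = 1) :
    ∏ k ∈ Finset.range B, (1 + (-1:ℝ) ^ (x k).val) = 0 := by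
  apply Finset.prod_eq_zero (Finset.mem_range.2 hu)
  rw [hxu, show ((1:ZMod 2)).val = 1 from rfl]
  norm_num

lemma caseQ1 (x : G) (t : ℕ) (hx2 : x t = 1) :
    ∀ B, t < B → (∀ k < B, k ≠ t → x k = 0) →
      ∑ m ∈ Finset.range (2 ^ B), (m:ℝ) * walsh m x = -(2:ℝ) ^ (B - 1 + t) := by
  intro B
  induction B with
  | zero => omega
  | succ B ih =>
    intro hB h0
    rcases Nat.lt_or_ge t B with hlt | hge
    · have hxB : x B = 0 := h0 B (Nat.lt_succ_self B) (by omega)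
      have hQ := ih hlt (fun k hk hkt => h0 k (by omega) hkt)
      rw [sumQ, hQ, hxB, Pzero x B t hlt hx2]
      rw [show ((0:ZMod 2)).val = 0 from rfl]
      have he : B + 1 - 1 + t = (B - 1 + t) + 1 := by omega
      rw [he, pow_succ]
      ring
    · have ht : t = B := by omega
      subst ht
      rw [sumQ, hx2]
      have hP : ∏ k ∈ Finset.range t, (1 + (-1:ℝ)^(x k).val) = 2 ^ t := by
        have hc : (2:ℝ)^t = ∏ _k ∈ Finset.range t, (2:ℝ) := by
          rw [Finset.prod_const, Finset.card_range]
        rw [hc]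
        apply Finset.prod_congr rfl
        intro k hk
        have hk' := Finset.mem_range.1 hk
        rw [h0 k (by omega) (by omega),
          show ((0:ZMod 2)).val = 0 from rfl]
        norm_num
      rw [hP, show ((1:ZMod 2)).val = 1 from rfl]
      have he : t + 1 - 1 + t = t + t := by omega
      rw [he, pow_add]
      ring

lemma caseQ3 (x : G) : ∀ A s t, s < A → t < A → s ≠ t → x s = 1 → x t = 1 →
    ∑ m ∈ Finset.range (2 ^ A), (m:ℝ) * walsh m x = 0 := by
  intro A
  induction A with
  | zero => omega
  | succ B ih =>
    intro s t hs ht hst hxs hxt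
    rcases Nat.lt_or_ge s B with hsB | hsB
    · rcases Nat.lt_or_ge t B with htB | htB
      · rw [sumQ, ih s t hsB htB hst hxs hxt, Pzero x B s hsB hxs]
        ring
      · have : t = B := by omega
        subst this
        rw [sumQ, hxt, Pzero x t s hsB hxs, show ((1:ZMod 2)).val = 1 from rfl]
        ring_nf
    · have : s = B := by omega
      subst this
      rw [sumQ, hxs, Pzero x s t (by omega) hxt, show ((1:ZMod 2)).val = 1 from rfl]
      ring_nf

lemma sum_dirichlet (x : G) (n : ℕ) :
    ∑ k ∈ Finset.range n, dirichlet k x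
      = ∑ j ∈ Finset.range n, ((n - 1 - j : ℕ) : ℝ) * walsh j x := by
  induction n with
  | zero => simp
  | succ n ih =>
    rw [Finset.sum_range_succ, ih]
    have h1 : ∑ j ∈ Finset.range (n+1), ((n + 1 - 1 - j : ℕ) : ℝ) * walsh j x
        = ∑ j ∈ Finset.range n, (((n - 1 - j : ℕ) : ℝ) * walsh j x + walsh j x) := by
      rw [Finset.sum_range_succ]
      have h0 : n + 1 - 1 - n = 0 := by omega
      rw [h0]
      simp only [Nat.cast_zero, zero_mul, add_zero]
      apply Finset.sum_congr rfl
      intro j hj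
      have hj' := Finset.mem_range.1 hj
      have : n + 1 - 1 - j = (n - 1 - j) + 1 := by omega
      rw [this]
      push_cast
      ring
    rw [h1, Finset.sum_add_distrib]
    simp [dirichlet]

lemma sum_dir_eval (x : G) (A : ℕ) :
    ∑ k ∈ Finset.range (2^A), dirichlet k x
      = ((2^A - 1 : ℕ):ℝ) * (∏ k ∈ Finset.range A, (1 + (-1:ℝ)^(x k).val))
        - ∑ m ∈ Finset.range (2^A), (m:ℝ) * walsh m x := by
  rw [sum_dirichlet, ← sumP, Finset.mul_sum, ← Finset.sum_sub_distrib]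
  apply Finset.sum_congr rfl
  intro j hj
  have hj' := Finset.mem_range.1 hj
  have h1 : j ≤ 2^A - 1 := by omega
  rw [Nat.cast_sub h1]
  ring

/-- **Gát's formula for the dyadic Fejér kernel.** Let `t < A` and `x ∈ I_t \ I_{t+1}`.
Then `K_{2^A}(x) = 2^{t-1}` if `x ∈ I_A(e_t)`, `K_{2^A}(x) = (2^A+1)/2` if `x ∈ I_A`,
and `K_{2^A}(x) = 0` otherwise. -/
theorem gat_fejer_kernel (A t : ℕ) (hAt : t < A) (x : G)
    (hx1 : ∀ j < t, x j = 0) (hx2 : x t = 1) :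
    ((∀ j < A, j ≠ t → x j = 0) → fejer (2 ^ A) x = (2 : ℝ) ^ ((t : ℤ) - 1)) ∧
    ((∀ j < A, x j = 0) → fejer (2 ^ A) x = ((2 : ℝ) ^ A + 1) / 2) ∧
    (¬ (∀ j < A, j ≠ t → x j = 0) → ¬ (∀ j < A, x j = 0) → fejer (2 ^ A) x = 0) := by
  refine ⟨?_, ?_, ?_⟩
  · intro h
    have hQ := caseQ1 x t hx2 A hAt h
    have hP := Pzero x A t hAt hx2
    have key : ∑ k ∈ Finset.range (2^A), dirichlet k x = (2:ℝ)^(A-1+t) := by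
      rw [sum_dir_eval, hP, hQ]
      ring
    unfold fejer
    rw [key]
    have h2A : ((2^A:ℕ):ℝ) = (2:ℝ)^A := by push_cast; ring
    rw [h2A, one_div, inv_mul_eq_div, div_eq_iff (by positivity)]
    rw [← zpow_natCast (2:ℝ) (A-1+t), ← zpow_natCast (2:ℝ) A,
      ← zpow_add₀ (by norm_num : (2:ℝ) ≠ 0)]
    congr 1
    omega
  · intro h
    exact absurd (h t hAt) (by rw [hx2]; exact one_ne_zero)
  · intro h _
    push_neg at h
    obtain ⟨s, hsA, hst, hxs⟩ := h
    have hxs1 : x s = 1 := by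
      have : ∀ a : ZMod 2, a ≠ 0 → a = 1 := by decide
      exact this _ hxs
    have hQ := caseQ3 x A s t hsA hAt hst hxs1 hx2
    have hP := Pzero x A t hAt hx2
    unfold fejer
    rw [sum_dir_eval, hP, hQ]
    ring
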